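/- Let n be an even positive integer and ζ_n a primitive n-th root of unity. Let f be a 0,1-polynomial with f(0) = 1, at least three terms, deg f < n/2 + φ(n), n/2 not an exponent of f, and f(ζ_n) = 0. Then there exists an exponent s of f with φ(n) ≤ s < n/2. -/

import Mathlib

open Polynomial

theorem exists_middle_exponent (n : ℕ) (hn : 0 < n) (heven : Even n)
    (f : Polynomial ℤ) (hcoeff : ∀ i, f.coeff i = 0 ∨ f.coeff i = 1)
    (hconst : f.coeff 0 = 1) (hterms : 3 ≤ f.support.card)
    (hdeg : f.natDegree < n / 2 + Nat.totient n) (hhalf : n / 2 ∉ f.support)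
    (ζ : ℂ) (hζ : IsPrimitiveRoot ζ n) (hroot : Polynomial.aeval ζ f = 0) :
    ∃ s ∈ f.support, Nat.totient n ≤ s ∧ s < n / 2 := by
  by_contra hc
  push_neg at hc
  set m := n / 2 with hm
  obtain ⟨k, hk⟩ := heven
  have hmpos : 0 < m := Nat.div_pos (by omega) (by norm_num)
  have hmlt : m < n := Nat.div_lt_self hn (by norm_num)
  have h2m : 2 * m = n := by omega
  -- ζ^m = -1
  have hzm : ζ ^ m = -1 := by
    have h1 : (ζ ^ m) ^ 2 = 1 := by
      rw [← pow_mul, mul_comm, h2m]; exact hζ.pow_eq_one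
    have h2 : ζ ^ m ≠ 1 := hζ.pow_ne_one_of_pos_of_lt hmpos.ne' hmlt
    rcases mul_self_eq_one_iff.mp (by rw [sq] at h1; exact h1) with h | h
    · exact absurd h h2
    · exact h
  classical
  set g : ℤ[X] := ∑ s ∈ f.support.filter (· < m), C (f.coeff s) * X ^ s with hg
  set h : ℤ[X] := ∑ s ∈ f.support.filter (m < ·), C (f.coeff s) * X ^ (s - m) with hh
  set p : ℤ[X] := g - h with hp
  -- coeff 0
  have hg0 : g.coeff 0 = 1 := by
    rw [hg, finset_sum_coeff]
    rw [Finset.sum_eq_single 0]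
    · simp [hconst]
    · intro b hb hb0
      simp only [coeff_C_mul, coeff_X_pow]
      simp [Ne.symm hb0]
    · intro h0
      simp only [Finset.mem_filter, mem_support_iff] at h0
      exact absurd ⟨by simp [hconst], hmpos⟩ h0
  have hh0 : h.coeff 0 = 0 := by
    rw [hh, finset_sum_coeff]
    apply Finset.sum_eq_zero
    intro b hb
    simp only [Finset.mem_filter] at hb
    have : b - m ≠ 0 := by omega
    simp [coeff_C_mul, coeff_X_pow, Ne.symm this]
  have hpne : p ≠ 0 := fun h0 => by
    have : p.coeff 0 = 0 := by rw [h0]; simp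
    rw [hp, coeff_sub, hg0, hh0] at this; norm_num at this
  -- degree bound
  have hpdeg : p.natDegree < Nat.totient n := by
    have hgd : g.natDegree < Nat.totient n := by
      apply Nat.lt_of_le_of_lt (natDegree_sum_le _ _)
      rw [Finset.fold_max_lt]
      constructor
      · exact Nat.totient_pos.mpr hn
      · intro s hs
        simp only [Finset.mem_filter, Function.comp] at hs
        apply Nat.lt_of_le_of_lt (natDegree_C_mul_X_pow_le _ _)
        have := hc s hs.1
        omega
    have hhd : h.natDegree < Nat.totient n := by
      apply Nat.lt_of_le_of_lt (natDegree_sum_le _ _)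
      rw [Finset.fold_max_lt]
      constructor
      · exact Nat.totient_pos.mpr hn
      · intro s hs
        simp only [Finset.mem_filter, Function.comp] at hs
        apply Nat.lt_of_le_of_lt (natDegree_C_mul_X_pow_le _ _)
        have hsd : s ≤ f.natDegree := le_natDegree_of_mem_supp s hs.1
        omega
    calc p.natDegree ≤ max g.natDegree h.natDegree := natDegree_sub_le _ _
    _ < Nat.totient n := max_lt hgd hhd
  -- root
  have hproot : Polynomial.aeval ζ p = 0 := by
    have hsplit : f.support = f.support.filter (· < m) ∪ f.support.filter (m < ·) := by
      ext s
      simp only [Finset.mem_union, Finset.mem_filter]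
      constructor
      · intro hs
        rcases lt_trichotomy s m with h1 | h1 | h1
        · exact Or.inl ⟨hs, h1⟩
        · exact absurd (h1 ▸ hs) hhalf
        · exact Or.inr ⟨hs, h1⟩
      · rintro (⟨hs, _⟩ | ⟨hs, _⟩) <;> exact hs
    have hf : Polynomial.aeval ζ f =
        ∑ s ∈ f.support, (f.coeff s : ℂ) * ζ ^ s := by
      rw [aeval_def, eval₂_eq_sum, Polynomial.sum]
      simp
    have hdisj : Disjoint (f.support.filter (· < m)) (f.support.filter (m < ·)) := by
      rw [Finset.disjoint_left]
      intro a ha hb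
      simp only [Finset.mem_filter] at ha hb
      omega
    rw [hsplit, Finset.sum_union hdisj] at hf
    have hgval : Polynomial.aeval ζ g = ∑ s ∈ f.support.filter (· < m), (f.coeff s : ℂ) * ζ ^ s := by
      rw [hg, map_sum]
      simp [algebraMap_int_eq, eq_intCast]
    have hhval : Polynomial.aeval ζ h = -∑ s ∈ f.support.filter (m < ·), (f.coeff s : ℂ) * ζ ^ s := by
      rw [hh, map_sum, ← Finset.sum_neg_distrib]
      apply Finset.sum_congr rfl
      intro s hs
      simp only [Finset.mem_filter] at hs
      have h3 : ζ ^ s = ζ ^ m * ζ ^ (s - m) := by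
        rw [← pow_add]; congr 1; omega
      rw [map_mul, aeval_C, aeval_X_pow, h3, hzm, algebraMap_int_eq, eq_intCast]
      ring
    rw [hf] at hroot
    rw [hp, map_sub, hgval, hhval]
    linear_combination hroot
  -- minpoly contradiction
  set q : ℚ[X] := p.map (algebraMap ℤ ℚ) with hq
  have hinj : Function.Injective (algebraMap ℤ ℚ) := fun a b hab => by
    exact_mod_cast hab
  have hQ : q ≠ 0 :=
    (Polynomial.map_ne_zero_iff hinj).mpr hpne
  have hQroot : Polynomial.aeval ζ q = 0 := by
    rw [hq, aeval_map_algebraMap]; exact hproot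
  have hmin := minpoly.degree_le_of_ne_zero ℚ ζ hQ hQroot
  rw [← Polynomial.cyclotomic_eq_minpoly_rat hζ hn] at hmin
  have hd1 : (cyclotomic n ℚ).natDegree = Nat.totient n := natDegree_cyclotomic n ℚ
  have hd2 : q.natDegree = p.natDegree :=
    natDegree_map_eq_of_injective hinj p
  have hcne : cyclotomic n ℚ ≠ 0 := cyclotomic_ne_zero n ℚ
  have := natDegree_le_natDegree hmin
  omega
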